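/- Let (T, H, C) be a biadditive THC-situation between abelian categories 𝒜₁, 𝒜₂, 𝒜₃ such that 𝒜₁ and 𝒜₂ have enough flat objects and 𝒜₃ has enough injectives. Then the class ℱ of flat objects of 𝒜₂ forms the left class of a cotorsion theory: (ℱ, ℱ^⊥) is a cotorsion theory, i.e. ℱ = ^⊥(ℱ^⊥). -/

import Mathlib

open CategoryTheory Limits Opposite

universe w v u v₁ u₁ v₂ u₂ v₃ u₃

/-- A biadditive THC-situation (adjunction of two variables) between three
abelian categories: bifunctors `T`, `H`, `C` with adjunctions
`Hom(T(X₁,X₂),X₃) ≅ Hom(X₁,H(X₂,X₃)) ≅ Hom(X₂,C(X₁,X₃))`, all biadditive. -/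
structure THC (𝒜₁ : Type u₁) (𝒜₂ : Type u₂) (𝒜₃ : Type u₃)
    [Category.{v₁} 𝒜₁] [Category.{v₂} 𝒜₂] [Category.{v₃} 𝒜₃]
    [Abelian 𝒜₁] [Abelian 𝒜₂] [Abelian 𝒜₃] where
  T : 𝒜₁ ⥤ 𝒜₂ ⥤ 𝒜₃
  H : 𝒜₂ᵒᵖ ⥤ 𝒜₃ ⥤ 𝒜₁
  C : 𝒜₁ᵒᵖ ⥤ 𝒜₃ ⥤ 𝒜₂
  adjT₂ : ∀ X₁ : 𝒜₁, T.obj X₁ ⊣ C.obj (op X₁)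
  adjT₁ : ∀ X₂ : 𝒜₂, T.flip.obj X₂ ⊣ H.obj (op X₂)
  addT₁ : ∀ X₂ : 𝒜₂, (T.flip.obj X₂).Additive
  addT₂ : ∀ X₁ : 𝒜₁, (T.obj X₁).Additive
  addH₁ : ∀ X₃ : 𝒜₃, (H.flip.obj X₃).Additive
  addH₂ : ∀ X₂ : 𝒜₂ᵒᵖ, (H.obj X₂).Additive
  addC₁ : ∀ X₃ : 𝒜₃, (C.flip.obj X₃).Additive
  addC₂ : ∀ X₁ : 𝒜₁ᵒᵖ, (C.obj X₁).Additive

variable {𝒜₁ : Type u₁} {𝒜₂ : Type u₂} {𝒜₃ : Type u₃}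
  [Category.{v₁} 𝒜₁] [Category.{v₂} 𝒜₂] [Category.{v₃} 𝒜₃]
  [Abelian 𝒜₁] [Abelian 𝒜₂] [Abelian 𝒜₃]

/-- An object `P` of `𝒜₂` is flat if `T(−, P)` preserves monomorphisms. -/
def THC.Flat₂ (S : THC 𝒜₁ 𝒜₂ 𝒜₃) (P : 𝒜₂) : Prop :=
  ∀ ⦃X Y : 𝒜₁⦄ (f : X ⟶ Y), Mono f → Mono ((S.T.flip.obj P).map f)

/-- An object `P` of `𝒜₁` is flat if `T(P, −)` preserves monomorphisms. -/
def THC.Flat₁ (S : THC 𝒜₁ 𝒜₂ 𝒜₃) (P : 𝒜₁) : Prop :=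
  ∀ ⦃X Y : 𝒜₂⦄ (f : X ⟶ Y), Mono f → Mono ((S.T.obj P).map f)

variable {𝒞 : Type u} [Category.{v} 𝒞] [Abelian 𝒞]

/-- `Y ∈ rightPerpSplit K` iff every short exact sequence `Y ↣ E ↠ Q` with `Q ∈ K`
splits. -/
def rightPerpSplit (K : Set 𝒞) : Set 𝒞 :=
  {Y | ∀ ⦃E Q : 𝒞⦄ (i : Y ⟶ E) (p : E ⟶ Q) (w : i ≫ p = 0),
    (ShortComplex.mk i p w).ShortExact → Q ∈ K → ∃ r : E ⟶ Y, i ≫ r = 𝟙 Y}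

/-- `X ∈ leftPerpSplit K` iff every short exact sequence `Y ↣ E ↠ X` with `Y ∈ K`
splits. -/
def leftPerpSplit (K : Set 𝒞) : Set 𝒞 :=
  {X | ∀ ⦃Y E : 𝒞⦄ (i : Y ⟶ E) (p : E ⟶ X) (w : i ≫ p = 0),
    (ShortComplex.mk i p w).ShortExact → Y ∈ K → ∃ s : X ⟶ E, s ≫ p = 𝟙 X}
namespace THCProofAux

open CategoryTheory.Abelian

variable (S : THC 𝒜₁ 𝒜₂ 𝒜₃)

/-- The contravariant action of `C(−, I)` on morphisms of `𝒜₁`, defined as the mate of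
`T.map f` under the adjunctions. -/
noncomputable def cMap {A B : 𝒜₁} (f : A ⟶ B) (I : 𝒜₃) :
    (S.C.obj (op B)).obj I ⟶ (S.C.obj (op A)).obj I :=
  ((S.adjT₂ A).homEquiv _ I)
    ((S.T.map f).app ((S.C.obj (op B)).obj I) ≫ (S.adjT₂ B).counit.app I)

lemma comp_cMap {A B : 𝒜₁} (f : A ⟶ B) (I : 𝒜₃) {X : 𝒜₂}
    (g : X ⟶ (S.C.obj (op B)).obj I) :
    g ≫ cMap S f I =
      ((S.adjT₂ A).homEquiv X I)
        ((S.T.map f).app X ≫ ((S.adjT₂ B).homEquiv X I).symm g) := by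
  rw [Adjunction.homEquiv_counit, ← Category.assoc, ← (S.T.map f).naturality g, Category.assoc,
    Adjunction.homEquiv_naturality_left]
  rfl

lemma homEquiv_symm_cMap {A B : 𝒜₁} (f : A ⟶ B) (I : 𝒜₃) {X : 𝒜₂}
    (g : X ⟶ (S.C.obj (op B)).obj I) :
    ((S.adjT₂ A).homEquiv X I).symm (g ≫ cMap S f I) =
      (S.T.map f).app X ≫ ((S.adjT₂ B).homEquiv X I).symm g := by
  rw [comp_cMap, Equiv.symm_apply_apply]

lemma cMap_comp {A B D : 𝒜₁} (u : A ⟶ B) (v : B ⟶ D) (I : 𝒜₃) :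
    cMap S (u ≫ v) I = cMap S v I ≫ cMap S u I := by
  rw [comp_cMap]
  show _ = ((S.adjT₂ A).homEquiv _ I) ((S.T.map u).app _ ≫
      ((S.adjT₂ B).homEquiv _ I).symm (((S.adjT₂ B).homEquiv _ I)
        ((S.T.map v).app _ ≫ (S.adjT₂ D).counit.app I)))
  rw [Equiv.symm_apply_apply, ← Category.assoc, ← NatTrans.comp_app, ← S.T.map_comp]
  rfl

lemma cMap_zero {A B : 𝒜₁} (I : 𝒜₃) : cMap S (0 : A ⟶ B) I = 0 := by
  haveI := S.addT₁ ((S.C.obj (op B)).obj I)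
  haveI := S.addC₂ (op A)
  have h0 : (S.T.map (0 : A ⟶ B)).app ((S.C.obj (op B)).obj I) = 0 :=
    (S.T.flip.obj ((S.C.obj (op B)).obj I)).map_zero A B
  rw [cMap, h0, Limits.zero_comp, Adjunction.homEquiv_unit, Functor.map_zero,
    Limits.comp_zero]

lemma homEquiv_zero {A : 𝒜₁} (I : 𝒜₃) {X : 𝒜₂} :
    ((S.adjT₂ A).homEquiv X I) 0 = 0 := by
  haveI := S.addC₂ (op A)
  rw [Adjunction.homEquiv_unit, Functor.map_zero, Limits.comp_zero]

lemma homEquiv_symm_zero {A : 𝒜₁} (I : 𝒜₃) {X : 𝒜₂} :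
    ((S.adjT₂ A).homEquiv X I).symm 0 = 0 := by
  haveI := S.addT₂ A
  rw [Adjunction.homEquiv_counit, Functor.map_zero, Limits.zero_comp]



section RightExact

variable {𝒞₁ : Type*} {𝒞₂ : Type*} [Category 𝒞₁] [Category 𝒞₂]
  [Abelian 𝒞₁] [Abelian 𝒞₂]

lemma map_exact_of_adj {F : 𝒞₁ ⥤ 𝒞₂} {G : 𝒞₂ ⥤ 𝒞₁} (adj : F ⊣ G)
    (hadd : F.Additive) {Sc : ShortComplex 𝒞₁} (hS : Sc.ShortExact) :
    (Sc.map F).Exact ∧ Epi (F.map Sc.g) := by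
  haveI := hadd
  haveI := adj.isLeftAdjoint
  haveI := adj.leftAdjoint_preservesColimits
  haveI := hS.epi_g
  exact ⟨hS.exact.map_of_epi_of_preservesCokernel F hS.epi_g inferInstance,
    F.map_epi _⟩

end RightExact

open CategoryTheory.Abelian.Pseudoelement in
/-- The key diagram-chasing lemma: if `W ↣ E ↠ Q` is short exact with `Q` flat, then
`T(D, −)` applied to `i : W ⟶ E` is a monomorphism, for any `D`. -/
lemma mono_T_map (S : THC 𝒜₁ 𝒜₂ 𝒜₃)
    (hf1 : ∀ X : 𝒜₁, ∃ (P : 𝒜₁) (p : P ⟶ X), S.Flat₁ P ∧ Epi p)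
    (D : 𝒜₁) {W E Q : 𝒜₂} (i : W ⟶ E) (p : E ⟶ Q) (w : i ≫ p = 0)
    (hse : (ShortComplex.mk i p w).ShortExact) (hQ : S.Flat₂ Q) :
    Mono ((S.T.obj D).map i) := by
  obtain ⟨P, ρ, hP, hρ⟩ := hf1 D
  haveI := hρ
  haveI : Mono i := hse.mono_f
  haveI : Epi p := hse.epi_g
  have wKP : kernel.ι ρ ≫ ρ = 0 := kernel.condition ρ
  have hseKP : (ShortComplex.mk (kernel.ι ρ) ρ wKP).ShortExact :=
    { exact := ShortComplex.exact_of_f_is_kernel _ (kernelIsKernel ρ) }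
  obtain ⟨exRowE, _⟩ := map_exact_of_adj (S.adjT₁ E) (S.addT₁ E) hseKP
  obtain ⟨exColK, _⟩ := map_exact_of_adj (S.adjT₂ (kernel ρ)) (S.addT₂ (kernel ρ)) hse
  obtain ⟨_, epiRowW⟩ := map_exact_of_adj (S.adjT₁ W) (S.addT₁ W) hseKP
  have pexRowE : ∀ b, pseudoApply ((S.T.flip.obj E).map ρ) b = 0 →
      ∃ a, pseudoApply ((S.T.flip.obj E).map (kernel.ι ρ)) a = b :=
    pseudo_exact_of_exact exRowE
  have pexColK : ∀ b, pseudoApply ((S.T.obj (kernel ρ)).map p) b = 0 →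
      ∃ a, pseudoApply ((S.T.obj (kernel ρ)).map i) a = b :=
    pseudo_exact_of_exact exColK
  haveI : Epi ((S.T.flip.obj W).map ρ) := epiRowW
  haveI monoaQ : Mono ((S.T.flip.obj Q).map (kernel.ι ρ)) := hQ _ inferInstance
  haveI monoiP : Mono ((S.T.obj P).map i) := hP i inferInstance
  have sq1 : (S.T.obj P).map i ≫ (S.T.flip.obj E).map ρ
      = (S.T.flip.obj W).map ρ ≫ (S.T.obj D).map i := (S.T.map ρ).naturality i
  have sq2 : (S.T.obj (kernel ρ)).map p ≫ (S.T.flip.obj Q).map (kernel.ι ρ)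
      = (S.T.flip.obj E).map (kernel.ι ρ) ≫ (S.T.obj P).map p :=
    (S.T.map (kernel.ι ρ)).naturality p
  have sq3 : (S.T.obj (kernel ρ)).map i ≫ (S.T.flip.obj E).map (kernel.ι ρ)
      = (S.T.flip.obj W).map (kernel.ι ρ) ≫ (S.T.obj P).map i :=
    (S.T.map (kernel.ι ρ)).naturality i
  haveI := S.addT₂ P
  haveI := S.addT₁ W
  have zc1 : (S.T.obj P).map i ≫ (S.T.obj P).map p = 0 := by
    rw [← Functor.map_comp, w, Functor.map_zero]
  have zc2 : (S.T.flip.obj W).map (kernel.ι ρ) ≫ (S.T.flip.obj W).map ρ = 0 := by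
    rw [← Functor.map_comp, wKP, Functor.map_zero]
  apply mono_of_zero_of_map_zero
  intro x hx
  obtain ⟨y, hy⟩ := pseudo_surjective_of_epi ((S.T.flip.obj W).map ρ) x
  have h1 : pseudoApply ((S.T.flip.obj E).map ρ) (pseudoApply ((S.T.obj P).map i) y) = 0 := by
    rw [← Abelian.Pseudoelement.comp_apply, sq1, Abelian.Pseudoelement.comp_apply, hy]
    exact hx
  obtain ⟨z, hz⟩ := pexRowE _ h1
  have h2 : pseudoApply ((S.T.flip.obj Q).map (kernel.ι ρ))
      (pseudoApply ((S.T.obj (kernel ρ)).map p) z) = 0 := by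
    rw [← Abelian.Pseudoelement.comp_apply, sq2, Abelian.Pseudoelement.comp_apply, hz,
      ← Abelian.Pseudoelement.comp_apply, zc1]
    exact zero_apply _ _
  have hz0 : pseudoApply ((S.T.obj (kernel ρ)).map p) z = 0 :=
    zero_of_map_zero _ (pseudo_injective_of_mono _) _ h2
  obtain ⟨w', hw'⟩ := pexColK _ hz0
  have h3 : pseudoApply ((S.T.obj P).map i)
        (pseudoApply ((S.T.flip.obj W).map (kernel.ι ρ)) w')
      = pseudoApply ((S.T.obj P).map i) y := by
    rw [← Abelian.Pseudoelement.comp_apply, ← sq3, Abelian.Pseudoelement.comp_apply, hw', hz]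
  have h4 : pseudoApply ((S.T.flip.obj W).map (kernel.ι ρ)) w' = y :=
    pseudo_injective_of_mono _ h3
  rw [← hy, ← h4, ← Abelian.Pseudoelement.comp_apply, zc2]
  exact zero_apply _ _

/-- `C(D, I)` splits in every short exact sequence below a flat object,
i.e. `C(D, I)` is cotorsion. -/
lemma cObj_mem_rightPerp (S : THC 𝒜₁ 𝒜₂ 𝒜₃)
    (hf1 : ∀ X : 𝒜₁, ∃ (P : 𝒜₁) (p : P ⟶ X), S.Flat₁ P ∧ Epi p)
    (D : 𝒜₁) (I : 𝒜₃) [Injective I] :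
    (S.C.obj (op D)).obj I ∈ rightPerpSplit {P : 𝒜₂ | S.Flat₂ P} := by
  intro E Q i p w hse hQ
  haveI := mono_T_map S hf1 D i p w hse hQ
  refine ⟨((S.adjT₂ D).homEquiv E I)
    (Injective.factorThru ((S.adjT₂ D).counit.app I) ((S.T.obj D).map i)), ?_⟩
  rw [← Adjunction.homEquiv_naturality_left, Injective.comp_factorThru,
    Adjunction.homEquiv_unit]
  exact (S.adjT₂ D).right_triangle_components I

lemma epi_cMap (S : THC 𝒜₁ 𝒜₂ 𝒜₃)
    (hf2 : ∀ X : 𝒜₂, ∃ (P : 𝒜₂) (p : P ⟶ X), S.Flat₂ P ∧ Epi p)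
    {A B : 𝒜₁} (f : A ⟶ B) [Mono f] (I : 𝒜₃) [Injective I] :
    Epi (cMap S f I) := by
  obtain ⟨P, q, hP, hq⟩ := hf2 ((S.C.obj (op A)).obj I)
  haveI := hq
  haveI : Mono ((S.T.map f).app P) := hP f inferInstance
  have hfac : (((S.adjT₂ B).homEquiv P I)
      (Injective.factorThru (((S.adjT₂ A).homEquiv P I).symm q) ((S.T.map f).app P)))
        ≫ cMap S f I = q := by
    rw [comp_cMap, Equiv.symm_apply_apply, Injective.comp_factorThru,
      Equiv.apply_symm_apply]
  exact epi_of_epi_fac hfac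

lemma cMap_w (S : THC 𝒜₁ 𝒜₂ 𝒜₃) {A B : 𝒜₁} (f : A ⟶ B) (I : 𝒜₃) :
    cMap S (cokernel.π f) I ≫ cMap S f I = 0 := by
  rw [← cMap_comp, cokernel.condition, cMap_zero]

lemma mono_cMap_of_epi (S : THC 𝒜₁ 𝒜₂ 𝒜₃) {B D : 𝒜₁} (ρ : B ⟶ D) [Epi ρ] (I : 𝒜₃) :
    Mono (cMap S ρ I) := by
  rw [Preadditive.mono_iff_cancel_zero]
  intro V t ht
  have key := homEquiv_symm_cMap S ρ I t
  rw [ht, homEquiv_symm_zero] at key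
  haveI := (S.adjT₁ V).isLeftAdjoint
  haveI : Epi ((S.T.map ρ).app V) := (S.T.flip.obj V).map_epi ρ
  have h0 : ((S.adjT₂ D).homEquiv V I).symm t = 0 := by
    rw [← cancel_epi ((S.T.map ρ).app V), Limits.comp_zero]
    exact key.symm
  have := congrArg ((S.adjT₂ D).homEquiv V I) h0
  rwa [Equiv.apply_symm_apply, homEquiv_zero] at this

lemma lift_of_comp_cMap_zero (S : THC 𝒜₁ 𝒜₂ 𝒜₃) {A B : 𝒜₁} (f : A ⟶ B) (I : 𝒜₃) {V : 𝒜₂}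
    (t : V ⟶ (S.C.obj (op B)).obj I) (ht : t ≫ cMap S f I = 0) :
    ∃ u : V ⟶ (S.C.obj (op (cokernel f))).obj I, u ≫ cMap S (cokernel.π f) I = t := by
  have hτ : (S.T.map f).app V ≫ ((S.adjT₂ B).homEquiv V I).symm t = 0 := by
    rw [← homEquiv_symm_cMap, ht, homEquiv_symm_zero]
  haveI := (S.adjT₁ V).leftAdjoint_preservesColimits
  haveI := S.addT₁ V
  have hc := CokernelCofork.mapIsColimit _ (cokernelIsCokernel f) (S.T.flip.obj V)
  obtain ⟨σ, hσ⟩ := CokernelCofork.IsColimit.desc' hc _ hτ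
  refine ⟨((S.adjT₂ (cokernel f)).homEquiv V I) σ, ?_⟩
  rw [comp_cMap, Equiv.symm_apply_apply ((S.adjT₂ (cokernel f)).homEquiv V I) σ]
  conv_rhs => rw [← Equiv.apply_symm_apply ((S.adjT₂ B).homEquiv V I) t]
  congr 1


end THCProofAux

open THCProofAux in
/-- The flat objects of `𝒜₂` form the left class of a cotorsion theory. -/
theorem statement10 (S : THC 𝒜₁ 𝒜₂ 𝒜₃) [EnoughInjectives 𝒜₃]
    (hf1 : ∀ X : 𝒜₁, ∃ (P : 𝒜₁) (p : P ⟶ X), S.Flat₁ P ∧ Epi p)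
    (hf2 : ∀ X : 𝒜₂, ∃ (P : 𝒜₂) (p : P ⟶ X), S.Flat₂ P ∧ Epi p) :
    leftPerpSplit (rightPerpSplit {P : 𝒜₂ | S.Flat₂ P}) = {P : 𝒜₂ | S.Flat₂ P} := by
  apply Set.eq_of_subset_of_subset
  · -- the hard inclusion: `X ∈ ⊥(ℱ⊥)` implies `X` flat
    intro X hX
    intro A B f hf
    haveI := hf
    set J := Injective.under ((S.T.obj A).obj X) with hJ
    set φ : X ⟶ (S.C.obj (op A)).obj J :=
      ((S.adjT₂ A).homEquiv X J) (Injective.ι ((S.T.obj A).obj X)) with hφ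
    haveI : Epi (cMap S f J) := epi_cMap S hf2 f J
    set k : (S.C.obj (op (cokernel f))).obj J ⟶ pullback (cMap S f J) φ :=
      pullback.lift (cMap S (cokernel.π f) J) 0
        (by rw [cMap_w, Limits.zero_comp]) with hk
    have hk_fst : k ≫ pullback.fst (cMap S f J) φ = cMap S (cokernel.π f) J :=
      pullback.lift_fst _ _ _
    have hk_snd : k ≫ pullback.snd (cMap S f J) φ = 0 := pullback.lift_snd _ _ _
    haveI : Mono (cMap S (cokernel.π f) J) := mono_cMap_of_epi S (cokernel.π f) J
    haveI : Mono k := mono_of_mono_fac hk_fst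
    -- `k` is a kernel of `pullback.snd`
    have hKer : IsLimit (KernelFork.ofι k hk_snd) := by
      refine KernelFork.IsLimit.ofι' k hk_snd (fun {V} t ht => ?_)
      have h1 : (t ≫ pullback.fst (cMap S f J) φ) ≫ cMap S f J = 0 := by
        rw [Category.assoc, pullback.condition, ← Category.assoc, ht, Limits.zero_comp]
      refine ⟨Classical.choose (lift_of_comp_cMap_zero S f J _ h1), ?_⟩
      have hu := Classical.choose_spec (lift_of_comp_cMap_zero S f J _ h1)
      apply pullback.hom_ext
      · rw [Category.assoc, hk_fst, hu]
      · rw [Category.assoc, hk_snd, Limits.comp_zero, ht]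
    have hse : (ShortComplex.mk k (pullback.snd (cMap S f J) φ) hk_snd).ShortExact :=
      { exact := ShortComplex.exact_of_f_is_kernel _ hKer }
    obtain ⟨s, hs⟩ := hX k (pullback.snd (cMap S f J) φ) hk_snd hse
      (cObj_mem_rightPerp S hf1 (cokernel f) J)
    have hg : (s ≫ pullback.fst (cMap S f J) φ) ≫ cMap S f J = φ := by
      rw [Category.assoc, pullback.condition, ← Category.assoc, hs, Category.id_comp]
    have hfac : (S.T.map f).app X ≫
        ((S.adjT₂ B).homEquiv X J).symm (s ≫ pullback.fst (cMap S f J) φ)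
          = Injective.ι ((S.T.obj A).obj X) := by
      rw [← homEquiv_symm_cMap, hg, hφ, Equiv.symm_apply_apply]
    haveI : Mono ((S.T.map f).app X) := mono_of_mono_fac hfac
    exact this
  · -- the easy inclusion: flat objects are in the left perpendicular class
    intro X hX
    intro Y E i p w hse hY
    obtain ⟨r, hr⟩ := hY i p w hse hX
    exact ⟨(ShortComplex.Splitting.ofExactOfRetraction _ hse.exact r hr hse.epi_g).s,
      (ShortComplex.Splitting.ofExactOfRetraction _ hse.exact r hr hse.epi_g).s_g⟩
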